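/- Let n, k ≥ 1, m = nk, 1 ≤ r ≤ ∞. For j = 1, …, n let v_j = Σ_{i=1}^k e_{j+k(i−1)} ∈ ℝ^m, let E = span{v_1, …, v_n}, and let φ : ℝ^n → E be the linear isometry (with respect to Euclidean norms) with φ(e_j) = v_j/√k. Then φ^{-1}(B_r^m ∩ E) = k^{1/2 − 1/r}·B_r^n; consequently, the n-dimensional volume of B_r^m ∩ E (induced by the Euclidean structure on E) equals k^{n(1/2 − 1/r)}·|B_r^n|, and, for p ≥ q, the n-th volume number of the identity from ℓ_p^m to ℓ_q^m satisfies v_n(id) ≥ (m/n)^{1/q − 1/p}·(|B_p^n|/|B_q^n|)^{1/n}. -/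

import Mathlib

open scoped BigOperators ENNReal Pointwise
open MeasureTheory
open scoped NNReal

/-- The unit ball of `ℓ_r^m` (`1 ≤ r ≤ ∞`), as a subset of `ℝ^m`. -/
noncomputable def pball (r : ℝ≥0∞) (m : ℕ) : Set (EuclideanSpace ℝ (Fin m)) :=
  {x | (if r = ∞ then ⨆ i, |x i| else (∑ i, |x i| ^ r.toReal) ^ r.toReal⁻¹) ≤ 1}

/-- The vector `v_j = Σ_{i=0}^{k-1} e_{j + n·i} ∈ ℝ^{nk}` (indices written `0`-based; the
supports of `v_0, …, v_{n-1}` partition the coordinates). -/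
noncomputable def vvec (n k : ℕ) (j : Fin n) : EuclideanSpace ℝ (Fin (n * k)) :=
  ∑ i : Fin k, EuclideanSpace.single
    ⟨j.val + n * i.val, by
      calc j.val + n * i.val < n + n * i.val := Nat.add_lt_add_right j.isLt _
        _ = n * (i.val + 1) := by ring
        _ ≤ n * k := Nat.mul_le_mul le_rfl i.isLt⟩ (1 : ℝ)

/-- The `n`-th volume number of `id : ℓ_p^m → ℓ_q^m`:
`v_n(id) = sup_E (|B_p^m ∩ E| / |B_q^m ∩ E|)^{1/n}` over `n`-dimensional subspaces `E ⊆ ℝ^m`;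
volumes are `n`-dimensional Hausdorff measures (agreeing, up to a common normalization that
cancels in the ratios, with the Lebesgue measure induced by the Euclidean structure). -/
noncomputable def volNum (m n : ℕ) (K L : Set (EuclideanSpace ℝ (Fin m))) : ℝ :=
  sSup {ρ : ℝ | ∃ E : Submodule ℝ (EuclideanSpace ℝ (Fin m)), Module.finrank ℝ E = n ∧
    ρ = ((μH[(n : ℝ)] (K ∩ (E : Set (EuclideanSpace ℝ (Fin m))))) /
          (μH[(n : ℝ)] (L ∩ (E : Set (EuclideanSpace ℝ (Fin m)))))).toReal ^ (n : ℝ)⁻¹}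

/-- The `ℓ_r` "norm" expression. -/
noncomputable def pnorm (r : ℝ≥0∞) (m : ℕ) (x : EuclideanSpace ℝ (Fin m)) : ℝ :=
  if r = ∞ then ⨆ i, |x i| else (∑ i, |x i| ^ r.toReal) ^ r.toReal⁻¹

lemma mem_pball {r : ℝ≥0∞} {m : ℕ} {x : EuclideanSpace ℝ (Fin m)} :
    x ∈ pball r m ↔ pnorm r m x ≤ 1 := Iff.rfl

lemma pnorm_nonneg (r : ℝ≥0∞) (m : ℕ) (x : EuclideanSpace ℝ (Fin m)) : 0 ≤ pnorm r m x := by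
  unfold pnorm; split
  · exact Real.iSup_nonneg fun i => abs_nonneg _
  · exact Real.rpow_nonneg
      (Finset.sum_nonneg fun i _ => Real.rpow_nonneg (abs_nonneg _) _) _

lemma one_le_toReal {r : ℝ≥0∞} (hr : 1 ≤ r) (hfin : r ≠ ∞) : (1 : ℝ) ≤ r.toReal := by
  rw [← ENNReal.toReal_one]; exact ENNReal.toReal_mono hfin hr

lemma pnorm_smul {r : ℝ≥0∞} (hr : 1 ≤ r) {m : ℕ} {c : ℝ} (hc : 0 ≤ c)
    (x : EuclideanSpace ℝ (Fin m)) : pnorm r m (c • x) = c * pnorm r m x := by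
  have hsm : ∀ i, (c • x) i = c * x i := fun i => rfl
  unfold pnorm; split
  · simp only [hsm, abs_mul, abs_of_nonneg hc]
    rw [Real.mul_iSup_of_nonneg hc]
  · rename_i hfin
    have hrr : (1:ℝ) ≤ r.toReal := one_le_toReal hr hfin
    have hrr0 : r.toReal ≠ 0 := by linarith
    have h1 : ∀ i : Fin m, |(c • x) i| ^ r.toReal = c ^ r.toReal * |x i| ^ r.toReal := by
      intro i; rw [hsm, abs_mul, abs_of_nonneg hc, Real.mul_rpow hc (abs_nonneg _)]
    simp only [h1, ← Finset.mul_sum]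
    rw [Real.mul_rpow (Real.rpow_nonneg hc _)
        (Finset.sum_nonneg fun i _ => Real.rpow_nonneg (abs_nonneg _) _),
      ← Real.rpow_mul hc, mul_inv_cancel₀ hrr0, Real.rpow_one]

/-- The index equivalence. -/
def eidx (n k : ℕ) : Fin n × Fin k ≃ Fin (n * k) :=
  (Equiv.prodComm _ _).trans (finProdFinEquiv.trans (finCongr (Nat.mul_comm k n)))

lemma eidx_apply (n k : ℕ) (j : Fin n) (i : Fin k) :
    ((eidx n k (j, i)) : ℕ) = j.val + n * i.val := rfl

lemma vvec_eq (n k : ℕ) (j : Fin n) :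
    vvec n k j = ∑ i : Fin k, EuclideanSpace.single (eidx n k (j, i)) (1 : ℝ) := by
  unfold vvec
  refine Finset.sum_congr rfl fun i _ => ?_
  exact congrArg (fun t => EuclideanSpace.single t (1:ℝ)) (Fin.ext rfl)

lemma vvec_apply (n k : ℕ) (j j' : Fin n) (i : Fin k) :
    vvec n k j' (eidx n k (j, i)) = if j' = j then 1 else 0 := by
  rw [vvec_eq, WithLp.ofLp_sum, Finset.sum_apply]
  simp only [EuclideanSpace.single_apply, EmbeddingLike.apply_eq_iff_eq, Prod.mk.injEq]
  by_cases h : j' = j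
  · subst h; simp
  · rw [if_neg h]
    refine Finset.sum_eq_zero fun i' _ => ?_
    rw [if_neg]; exact fun hh => h hh.1.symm
  
/-- if `pnorm p y ≤ 1` then `pnorm q y ≤ m` for `1 ≤ q ≤ p`. -/
lemma pnorm_le_card {p q : ℝ≥0∞} (hq : 1 ≤ q) (hpq : q ≤ p) {m : ℕ} (hm : 0 < m)
    (y : EuclideanSpace ℝ (Fin m)) (hy : pnorm p m y ≤ 1) : pnorm q m y ≤ (m : ℝ) := by
  have hp : 1 ≤ p := hq.trans hpq
  have hm1 : (1:ℝ) ≤ (m:ℝ) := by exact_mod_cast hm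
  have : Nonempty (Fin m) := ⟨⟨0, hm⟩⟩
  have habs : ∀ i, |y i| ≤ 1 := by
    intro i
    refine le_trans ?_ hy
    unfold pnorm; split
    · exact le_ciSup (f := fun i => |y i|) (Finite.bddAbove_range _) i
    · rename_i hfin
      have hpp : (1:ℝ) ≤ p.toReal := one_le_toReal hp hfin
      have hpp0 : p.toReal ≠ 0 := by linarith
      calc |y i| = (|y i| ^ p.toReal) ^ p.toReal⁻¹ := by
            rw [← Real.rpow_mul (abs_nonneg _), mul_inv_cancel₀ hpp0, Real.rpow_one]
        _ ≤ _ := Real.rpow_le_rpow (Real.rpow_nonneg (abs_nonneg _) _)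
            (Finset.single_le_sum (fun _ _ => Real.rpow_nonneg (abs_nonneg _) _)
              (Finset.mem_univ i)) (inv_nonneg.mpr (by linarith))
  unfold pnorm; split
  · exact (ciSup_le fun i => habs i).trans hm1
  · rename_i hfin
    have hqq : (1:ℝ) ≤ q.toReal := one_le_toReal hq hfin
    have hle : ∑ i, |y i| ^ q.toReal ≤ (m:ℝ) := by
      calc ∑ i, |y i| ^ q.toReal ≤ ∑ _i : Fin m, (1:ℝ) :=
            Finset.sum_le_sum fun i _ => Real.rpow_le_one (abs_nonneg _) (habs i) (by linarith)
        _ = m := by simp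
    calc (∑ i, |y i| ^ q.toReal) ^ q.toReal⁻¹ ≤ (m:ℝ) ^ q.toReal⁻¹ :=
          Real.rpow_le_rpow
            (Finset.sum_nonneg fun i _ => Real.rpow_nonneg (abs_nonneg _) _) hle
            (inv_nonneg.mpr (by linarith))
      _ ≤ (m:ℝ) ^ (1:ℝ) := Real.rpow_le_rpow_of_exponent_le hm1
          (by rw [inv_le_one₀ (by linarith)]; exact hqq)
      _ = m := Real.rpow_one _

lemma nnnorm_rpow_coe {c : ℝ} (hc : 0 ≤ c) (d : ℝ) :
    ((‖c‖₊ ^ d : ℝ≥0) : ℝ≥0∞) = ENNReal.ofReal (c ^ d) := by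
  have h : ‖c‖₊ = c.toNNReal := by
    ext; simp [Real.coe_toNNReal _ hc, Real.norm_of_nonneg hc]
  rw [h, ← Real.toNNReal_rpow_of_nonneg hc]
  rfl

/-- Let `m = nk`, `E = span{v_1, …, v_n}` and let `φ : ℝ^n → ℝ^m` be the
linear isometry with `φ(e_j) = v_j/√k`.  Then `φ⁻¹(B_r^m ∩ E) = k^{1/2-1/r}·B_r^n`;
consequently the `n`-dimensional volume of `B_r^m ∩ E` equals `k^{n(1/2-1/r)}·|B_r^n|`, and
for `p ≥ q` the `n`-th volume number of `id : ℓ_p^m → ℓ_q^m` satisfies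
`v_n(id) ≥ (m/n)^{1/q-1/p}·(|B_p^n|/|B_q^n|)^{1/n}` (with `1/∞ = 0`). -/
theorem stmt19 (n k : ℕ) (hn : 0 < n) (hk : 0 < k)
    (φ : EuclideanSpace ℝ (Fin n) →ₗᵢ[ℝ] EuclideanSpace ℝ (Fin (n * k)))
    (hφ : ∀ j : Fin n, φ (EuclideanSpace.single j (1 : ℝ)) = (Real.sqrt k)⁻¹ • vvec n k j) :
    (∀ r : ℝ≥0∞, 1 ≤ r →
      ⇑φ ⁻¹' (pball r (n * k) ∩
          (Submodule.span ℝ (Set.range (vvec n k)) : Set (EuclideanSpace ℝ (Fin (n * k))))) =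
        ((k : ℝ) ^ ((1 : ℝ) / 2 - r.toReal⁻¹)) • pball r n) ∧
    (∀ r : ℝ≥0∞, 1 ≤ r →
      μH[(n : ℝ)] (pball r (n * k) ∩
          (Submodule.span ℝ (Set.range (vvec n k)) : Set (EuclideanSpace ℝ (Fin (n * k))))) =
        ENNReal.ofReal ((k : ℝ) ^ ((n : ℝ) * ((1 : ℝ) / 2 - r.toReal⁻¹))) *
          μH[(n : ℝ)] (pball r n)) ∧
    (∀ p q : ℝ≥0∞, 1 ≤ q → q ≤ p →
      ((n * k : ℝ) / (n : ℝ)) ^ (q.toReal⁻¹ - p.toReal⁻¹) *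
          ((μH[(n : ℝ)] (pball p n)) / (μH[(n : ℝ)] (pball q n))).toReal ^ (n : ℝ)⁻¹ ≤
        volNum (n * k) n (pball p (n * k)) (pball q (n * k))) := by
  have hk0 : (0:ℝ) < (k:ℝ) := by exact_mod_cast hk
  have hn0 : ((n:ℝ)) ≠ 0 := by exact_mod_cast hn.ne'
  have hsk : Real.sqrt k ≠ 0 := ne_of_gt (Real.sqrt_pos.mpr hk0)
  set E := Submodule.span ℝ (Set.range (vvec n k)) with hE
  -- formula for φ
  have hφx : ∀ x : EuclideanSpace ℝ (Fin n),
      φ x = (Real.sqrt k)⁻¹ • ∑ j, x j • vvec n k j := by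
    intro x
    have hx : x = ∑ j, x j • EuclideanSpace.single j (1:ℝ) := by
      have h := (EuclideanSpace.basisFun (Fin n) ℝ).sum_repr x
      simp only [EuclideanSpace.basisFun_repr, EuclideanSpace.basisFun_apply] at h
      exact h.symm
    conv_lhs => rw [hx]
    rw [map_sum, Finset.smul_sum]
    refine Finset.sum_congr rfl fun j _ => ?_
    rw [φ.map_smul, hφ j, smul_comm]
  -- evaluation of the sum
  have hw : ∀ (x : EuclideanSpace ℝ (Fin n)) (j : Fin n) (i : Fin k),
      (∑ j', x j' • vvec n k j') (eidx n k (j, i)) = x j := by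
    intro x j i
    rw [WithLp.ofLp_sum, Finset.sum_apply]
    have h1 : ∀ j' : Fin n, (x j' • vvec n k j') (eidx n k (j, i))
        = x j' * (if j' = j then 1 else 0) := by
      intro j'; rw [← vvec_apply n k j j' i]; rfl
    simp only [h1, mul_ite, mul_one, mul_zero]
    simp
  -- pnorm of the sum
  have hpw : ∀ r : ℝ≥0∞, 1 ≤ r → ∀ x : EuclideanSpace ℝ (Fin n),
      pnorm r (n*k) (∑ j, x j • vvec n k j) = (k:ℝ) ^ r.toReal⁻¹ * pnorm r n x := by
    intro r hr x
    unfold pnorm; split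
    · rename_i htop
      rw [htop]
      simp only [ENNReal.toReal_top, inv_zero, Real.rpow_zero, one_mul]
      have hrange : Set.range (fun t => |(∑ j', x j' • vvec n k j') t|)
          = Set.range (fun j : Fin n => |x j|) := by
        ext y; constructor
        · rintro ⟨t, rfl⟩
          obtain ⟨⟨j, i⟩, rfl⟩ := (eidx n k).surjective t
          exact ⟨j, by simp only [hw]⟩
        · rintro ⟨j, rfl⟩
          exact ⟨eidx n k (j, ⟨0, hk⟩), by simp only [hw]⟩
      rw [← sSup_range, ← sSup_range, hrange]
    · have hsum : ∑ t, |(∑ j', x j' • vvec n k j') t| ^ r.toReal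
          = (k:ℝ) * ∑ j, |x j| ^ r.toReal := by
        rw [← Equiv.sum_comp (eidx n k)
          (fun t => |(∑ j', x j' • vvec n k j') t| ^ r.toReal), Fintype.sum_prod_type]
        simp only [hw, Finset.sum_const, Finset.card_univ, Fintype.card_fin,
          nsmul_eq_mul, ← Finset.mul_sum]
      rw [hsum, Real.mul_rpow hk0.le
        (Finset.sum_nonneg fun i _ => Real.rpow_nonneg (abs_nonneg _) _)]
  -- pnorm of φ x
  have hpφ : ∀ r : ℝ≥0∞, 1 ≤ r → ∀ x : EuclideanSpace ℝ (Fin n),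
      pnorm r (n*k) (φ x) = (k:ℝ) ^ (r.toReal⁻¹ - 1/2) * pnorm r n x := by
    intro r hr x
    rw [hφx, pnorm_smul hr (inv_nonneg.mpr (Real.sqrt_nonneg _)), hpw r hr]
    have hs : (Real.sqrt (k:ℝ))⁻¹ = (k:ℝ) ^ (-(1/2 : ℝ)) := by
      rw [Real.sqrt_eq_rpow, ← Real.rpow_neg hk0.le]
    rw [hs, ← mul_assoc, ← Real.rpow_add hk0,
      show -(1/2:ℝ) + r.toReal⁻¹ = r.toReal⁻¹ - 1/2 by ring]
  -- membership in E
  have hmemE : ∀ x, φ x ∈ E := by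
    intro x
    rw [hφx]
    exact Submodule.smul_mem _ _ (Submodule.sum_mem _ fun j _ =>
      Submodule.smul_mem _ _ (Submodule.subset_span ⟨j, rfl⟩))
  have hvj : ∀ j, φ ((Real.sqrt k) • EuclideanSpace.single j (1:ℝ)) = vvec n k j := by
    intro j; rw [φ.map_smul, hφ, smul_smul, mul_inv_cancel₀ hsk, one_smul]
  have hEeq : E = LinearMap.range φ.toLinearMap := by
    refine le_antisymm (Submodule.span_le.mpr ?_) ?_
    · rintro y ⟨j, rfl⟩
      exact ⟨(Real.sqrt k) • EuclideanSpace.single j (1:ℝ), hvj j⟩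
    · rintro y ⟨x, rfl⟩
      exact hmemE x
  have hrangeE : Set.range ⇑φ = (E : Set (EuclideanSpace ℝ (Fin (n*k)))) := by
    ext y; constructor
    · rintro ⟨x, rfl⟩; exact hmemE x
    · intro hy
      rw [hEeq] at hy
      obtain ⟨x, rfl⟩ := hy
      exact ⟨x, rfl⟩
  -- Part 1
  have part1 : ∀ r : ℝ≥0∞, 1 ≤ r →
      ⇑φ ⁻¹' (pball r (n * k) ∩ (E : Set (EuclideanSpace ℝ (Fin (n * k))))) =
        ((k : ℝ) ^ ((1 : ℝ) / 2 - r.toReal⁻¹)) • pball r n := by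
    intro r hr
    have hc : (0:ℝ) < (k:ℝ) ^ ((1:ℝ)/2 - r.toReal⁻¹) := Real.rpow_pos_of_pos hk0 _
    have hcinv : ((k:ℝ) ^ ((1:ℝ)/2 - r.toReal⁻¹))⁻¹ = (k:ℝ) ^ (r.toReal⁻¹ - 1/2) := by
      rw [← Real.rpow_neg hk0.le, show -((1:ℝ)/2 - r.toReal⁻¹) = r.toReal⁻¹ - 1/2 by ring]
    ext x
    simp only [Set.mem_preimage, Set.mem_inter_iff, SetLike.mem_coe]
    rw [and_iff_left (hmemE x), mem_pball, hpφ r hr x,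
      Set.mem_smul_set_iff_inv_smul_mem₀ hc.ne', mem_pball,
      pnorm_smul hr (inv_nonneg.mpr hc.le), hcinv]
  -- Part 2
  have part2 : ∀ r : ℝ≥0∞, 1 ≤ r →
      μH[(n : ℝ)] (pball r (n * k) ∩ (E : Set (EuclideanSpace ℝ (Fin (n * k))))) =
        ENNReal.ofReal ((k : ℝ) ^ ((n : ℝ) * ((1 : ℝ) / 2 - r.toReal⁻¹))) *
          μH[(n : ℝ)] (pball r n) := by
    intro r hr
    have hc : (0:ℝ) < (k:ℝ) ^ ((1:ℝ)/2 - r.toReal⁻¹) := Real.rpow_pos_of_pos hk0 _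
    have himg : ⇑φ '' (⇑φ ⁻¹' (pball r (n*k) ∩ (E : Set (EuclideanSpace ℝ (Fin (n*k))))))
        = pball r (n*k) ∩ (E : Set (EuclideanSpace ℝ (Fin (n*k)))) := by
      rw [Set.image_preimage_eq_inter_range, hrangeE, Set.inter_assoc, Set.inter_self]
    have hnn : (0:ℝ) ≤ (n:ℝ) := Nat.cast_nonneg n
    calc μH[(n:ℝ)] (pball r (n*k) ∩ (E : Set (EuclideanSpace ℝ (Fin (n*k)))))
        = μH[(n:ℝ)] (⇑φ '' (⇑φ ⁻¹' (pball r (n*k) ∩ (E : Set (EuclideanSpace ℝ (Fin (n*k))))))) := by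
          rw [himg]
      _ = μH[(n:ℝ)] (⇑φ ⁻¹' (pball r (n*k) ∩ (E : Set (EuclideanSpace ℝ (Fin (n*k)))))) :=
          φ.isometry.hausdorffMeasure_image (Or.inl hnn) _
      _ = μH[(n:ℝ)] (((k:ℝ) ^ ((1:ℝ)/2 - r.toReal⁻¹)) • pball r n) := by rw [part1 r hr]
      _ = ENNReal.ofReal ((k : ℝ) ^ ((n : ℝ) * ((1 : ℝ) / 2 - r.toReal⁻¹))) *
          μH[(n : ℝ)] (pball r n) := by
          rw [Measure.hausdorffMeasure_smul₀ hnn hc.ne' (pball r n), ENNReal.smul_def,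
            smul_eq_mul, nnnorm_rpow_coe hc.le]
          congr 2
          rw [← Real.rpow_mul hk0.le, mul_comm ((1:ℝ)/2 - r.toReal⁻¹) ((n:ℝ))]
  refine ⟨part1, part2, ?_⟩
  -- Part 3
  intro p q hq hpq
  have hp : 1 ≤ p := hq.trans hpq
  have hfr : Module.finrank ℝ E = n := by
    rw [hEeq, LinearMap.finrank_range_of_inj, finrank_euclideanSpace_fin]
    exact φ.injective
  have hnk : 0 < n * k := Nat.mul_pos hn hk
  have hm1 : (1:ℝ) ≤ ((n*k : ℕ):ℝ) := by exact_mod_cast hnk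
  have hm0 : ((n*k : ℕ):ℝ) ≠ 0 := by positivity
  have hnn : (0:ℝ) ≤ (n:ℝ) := Nat.cast_nonneg n
  -- bounded above
  have hbdd : BddAbove {ρ : ℝ | ∃ F : Submodule ℝ (EuclideanSpace ℝ (Fin (n*k))),
      Module.finrank ℝ F = n ∧
    ρ = ((μH[(n : ℝ)] (pball p (n*k) ∩ (F : Set (EuclideanSpace ℝ (Fin (n*k)))))) /
          (μH[(n : ℝ)] (pball q (n*k) ∩ (F : Set (EuclideanSpace ℝ (Fin (n*k))))))).toReal
            ^ (n : ℝ)⁻¹} := by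
    refine ⟨(((n*k : ℕ):ℝ) ^ ((n:ℝ))) ^ ((n:ℝ))⁻¹, ?_⟩
    rintro ρ ⟨F, hF, rfl⟩
    have hsub2 : pball p (n*k) ∩ (F : Set (EuclideanSpace ℝ (Fin (n*k)))) ⊆
        (((n*k : ℕ):ℝ)) • (pball q (n*k) ∩ (F : Set (EuclideanSpace ℝ (Fin (n*k))))) := by
      rintro y ⟨hyp, hyF⟩
      refine ⟨(((n*k : ℕ):ℝ))⁻¹ • y, ⟨?_, F.smul_mem _ hyF⟩, smul_inv_smul₀ hm0 y⟩
      rw [mem_pball, pnorm_smul hq (inv_nonneg.mpr (by positivity)),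
        inv_mul_le_iff₀ (by positivity), mul_one]
      exact pnorm_le_card hq hpq hnk y hyp
    have h1 : μH[(n:ℝ)] (pball p (n*k) ∩ (F : Set (EuclideanSpace ℝ (Fin (n*k)))))
        ≤ ENNReal.ofReal (((n*k : ℕ):ℝ) ^ ((n:ℝ))) *
          μH[(n:ℝ)] (pball q (n*k) ∩ (F : Set (EuclideanSpace ℝ (Fin (n*k))))) := by
      calc μH[(n:ℝ)] (pball p (n*k) ∩ (F : Set (EuclideanSpace ℝ (Fin (n*k)))))
          ≤ μH[(n:ℝ)] ((((n*k : ℕ):ℝ)) •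
              (pball q (n*k) ∩ (F : Set (EuclideanSpace ℝ (Fin (n*k)))))) :=
            measure_mono hsub2
        _ = _ := by
            rw [Measure.hausdorffMeasure_smul₀ hnn hm0 _, ENNReal.smul_def, smul_eq_mul,
              nnnorm_rpow_coe (by positivity)]
    have h2 : (μH[(n:ℝ)] (pball p (n*k) ∩ (F : Set (EuclideanSpace ℝ (Fin (n*k)))))) /
        (μH[(n:ℝ)] (pball q (n*k) ∩ (F : Set (EuclideanSpace ℝ (Fin (n*k)))))) ≤
          ENNReal.ofReal (((n*k : ℕ):ℝ) ^ ((n:ℝ))) := by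
      refine le_trans (ENNReal.div_le_div_right h1 _) ?_
      rw [mul_div_assoc]
      calc ENNReal.ofReal (((n*k : ℕ):ℝ) ^ ((n:ℝ))) * (_ / _)
          ≤ ENNReal.ofReal (((n*k : ℕ):ℝ) ^ ((n:ℝ))) * 1 :=
            mul_le_mul_right ENNReal.div_self_le_one _
        _ = _ := mul_one _
    have h3 : ((μH[(n:ℝ)] (pball p (n*k) ∩ (F : Set (EuclideanSpace ℝ (Fin (n*k)))))) /
        (μH[(n:ℝ)] (pball q (n*k) ∩ (F : Set (EuclideanSpace ℝ (Fin (n*k))))))).toReal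
          ≤ ((n*k : ℕ):ℝ) ^ ((n:ℝ)) := by
      have h4 := ENNReal.toReal_mono ENNReal.ofReal_ne_top h2
      rwa [ENNReal.toReal_ofReal (by positivity)] at h4
    exact Real.rpow_le_rpow ENNReal.toReal_nonneg h3 (inv_nonneg.mpr hnn)
  -- the element for E
  have hmem : ((μH[(n : ℝ)] (pball p (n*k) ∩ (E : Set (EuclideanSpace ℝ (Fin (n*k)))))) /
      (μH[(n : ℝ)] (pball q (n*k) ∩ (E : Set (EuclideanSpace ℝ (Fin (n*k))))))).toReal
        ^ (n : ℝ)⁻¹ ∈ {ρ : ℝ | ∃ F : Submodule ℝ (EuclideanSpace ℝ (Fin (n*k))),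
      Module.finrank ℝ F = n ∧
    ρ = ((μH[(n : ℝ)] (pball p (n*k) ∩ (F : Set (EuclideanSpace ℝ (Fin (n*k)))))) /
          (μH[(n : ℝ)] (pball q (n*k) ∩ (F : Set (EuclideanSpace ℝ (Fin (n*k))))))).toReal
            ^ (n : ℝ)⁻¹} := ⟨E, hfr, rfl⟩
  have key : ((n * k : ℝ) / (n : ℝ)) ^ (q.toReal⁻¹ - p.toReal⁻¹) *
      ((μH[(n : ℝ)] (pball p n)) / (μH[(n : ℝ)] (pball q n))).toReal ^ (n : ℝ)⁻¹ =
      ((μH[(n : ℝ)] (pball p (n*k) ∩ (E : Set (EuclideanSpace ℝ (Fin (n*k)))))) /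
      (μH[(n : ℝ)] (pball q (n*k) ∩ (E : Set (EuclideanSpace ℝ (Fin (n*k))))))).toReal
        ^ (n : ℝ)⁻¹ := by
    rw [part2 p hp, part2 q hq]
    set a : ℝ := (k:ℝ) ^ ((n : ℝ) * ((1 : ℝ) / 2 - p.toReal⁻¹)) with ha
    set b : ℝ := (k:ℝ) ^ ((n : ℝ) * ((1 : ℝ) / 2 - q.toReal⁻¹)) with hb
    have ha0 : 0 < a := Real.rpow_pos_of_pos hk0 _
    have hb0 : 0 < b := Real.rpow_pos_of_pos hk0 _
    set μp := μH[(n : ℝ)] (pball p n)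
    set μq := μH[(n : ℝ)] (pball q n)
    have hdiv : (ENNReal.ofReal a * μp) / (ENNReal.ofReal b * μq)
        = ENNReal.ofReal (a/b) * (μp / μq) := by
      rw [ENNReal.ofReal_div_of_pos hb0, div_eq_mul_inv, div_eq_mul_inv, div_eq_mul_inv,
        ENNReal.mul_inv (Or.inl (ENNReal.ofReal_pos.mpr hb0).ne') (Or.inl ENNReal.ofReal_ne_top)]
      ring
    rw [hdiv, ENNReal.toReal_mul, ENNReal.toReal_ofReal (div_nonneg ha0.le hb0.le),
      Real.mul_rpow (div_nonneg ha0.le hb0.le) ENNReal.toReal_nonneg]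
    congr 1
    rw [ha, hb, ← Real.rpow_sub hk0,
      show (n : ℝ) * ((1 : ℝ) / 2 - p.toReal⁻¹) - (n : ℝ) * ((1 : ℝ) / 2 - q.toReal⁻¹)
        = (q.toReal⁻¹ - p.toReal⁻¹) * (n:ℝ) by ring,
      ← Real.rpow_mul hk0.le, mul_assoc, mul_inv_cancel₀ hn0, mul_one]
    congr 1
    rw [mul_comm, mul_div_assoc, div_self hn0, mul_one]
  rw [key]
  exact le_csSup hbdd hmem
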